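/- Let (g,[·,·],φ) be a regular Hom-Lie algebra and r ∈ ∧²g with r♯∘(φ⁻¹)* = φ∘r♯. Define Δ(x) = [φ⁻²(x), r] and the dual bracket [ξ,η]_{g*} via ⟨[ξ,η]_{g*},x⟩ = ⟨Δ(x),ξ∧η⟩. Then [ξ,η]_{g*} = ad*_{φ(r♯(ξ))}((φ⁻²)*(η)) − ad*_{φ(r♯(η))}((φ⁻²)*(ξ)) for all ξ,η ∈ g*. -/
import Mathlib


open LinearMap Module

/-- A (regular, i.e. multiplicative with invertible structure map) Hom-Lie algebra. -/
structure HomLieAlgebra (K g : Type*) [Field K] [AddCommGroup g] [Module K g] where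
  bracket : g →ₗ[K] g →ₗ[K] g
  phi : g ≃ₗ[K] g
  skew : ∀ x y, bracket x y = - bracket y x
  phi_bracket : ∀ x y, phi (bracket x y) = bracket (phi x) (phi y)
  jacobi : ∀ x y z,
    bracket (phi x) (bracket y z) + bracket (phi y) (bracket z x)
      + bracket (phi z) (bracket x y) = 0

variable {K g V : Type*} [Field K] [AddCommGroup g] [Module K g]
  [AddCommGroup V] [Module K V]

/-- `ρ` is a representation of the Hom-Lie algebra `L` on `V` with respect to `β`. -/
def HomLieAlgebra.IsRep (L : HomLieAlgebra K g) (β : V ≃ₗ[K] V)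
    (ρ : g →ₗ[K] V →ₗ[K] V) : Prop :=
  (∀ x u, ρ (L.phi x) (β u) = β (ρ x u)) ∧
  (∀ x y u, ρ (L.bracket x y) (β u) = ρ (L.phi x) (ρ y u) - ρ (L.phi y) (ρ x u))

variable [FiniteDimensional K g]

/-- The adjoint action of `x ∈ g` on `∧²g`, encoded on skew bilinear forms on `g*`. -/
def adExt (L : HomLieAlgebra K g) (x : g) (W : Dual K g → Dual K g → K)
    (ξ η : Dual K g) : K :=
  W (ξ ∘ₗ L.bracket x) (η ∘ₗ L.phi.toLinearMap)
    + W (ξ ∘ₗ L.phi.toLinearMap) (η ∘ₗ L.bracket x)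

/-- The bracket on `g*` obtained from the cobracket `Δ(x) = [φ⁻²(x), r]`:
`⟨[ξ,η]_{g*}, x⟩ = ⟨[φ⁻²(x), r], ξ∧η⟩`, where `r ∈ ∧²g` is encoded by the skew map
`r♯ : g* → g` via the bilinear form `(ξ,η) ↦ ⟨r,ξ∧η⟩ = η(r♯(ξ))`. -/
def deltaBracket (L : HomLieAlgebra K g) (rs : Dual K g →ₗ[K] g)
    (ξ η : Dual K g) (x : g) : K :=
  adExt L (L.phi.symm (L.phi.symm x)) (fun α β => β (rs α)) ξ η

/-- for `r ∈ ∧²g` with `r♯ ∘ (φ⁻¹)* = φ ∘ r♯`, the bracket defined by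
`⟨[ξ,η]_{g*},x⟩ = ⟨[φ⁻²(x),r], ξ∧η⟩` satisfies
`[ξ,η]_{g*} = ad*_{φ(r♯(ξ))}((φ⁻²)*(η)) − ad*_{φ(r♯(η))}((φ⁻²)*(ξ))`. -/
theorem deltaBracket_eq_coad (L : HomLieAlgebra K g) (rs : Dual K g →ₗ[K] g)
    (hskew : ∀ ξ η : Dual K g, η (rs ξ) = - ξ (rs η))
    (hcomm : ∀ ξ : Dual K g, rs (ξ ∘ₗ L.phi.symm.toLinearMap) = L.phi (rs ξ)) :
    ∀ (ξ η : Dual K g) (x : g),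
      deltaBracket L rs ξ η x
        = - η (L.phi.symm (L.phi.symm (L.bracket (L.phi (rs ξ)) x)))
          + ξ (L.phi.symm (L.phi.symm (L.bracket (L.phi (rs η)) x))) := by
  intro ξ η x
  have hinv : ∀ u v, L.phi.symm (L.bracket u v)
      = L.bracket (L.phi.symm u) (L.phi.symm v) := by
    intro u v
    apply L.phi.injective
    rw [L.phi_bracket, L.phi.apply_symm_apply, L.phi.apply_symm_apply,
      L.phi.apply_symm_apply]
  have hrs : ∀ ζ : Dual K g, rs (ζ ∘ₗ L.phi.toLinearMap) = L.phi.symm (rs ζ) := by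
    intro ζ
    apply L.phi.injective
    rw [L.phi.apply_symm_apply, ← hcomm (ζ ∘ₗ L.phi.toLinearMap)]
    congr 1
    ext z
    simp
  set y := L.phi.symm (L.phi.symm x) with hy
  have hterm2 : (η ∘ₗ L.bracket y) (rs (ξ ∘ₗ L.phi.toLinearMap))
      = - η (L.phi.symm (L.phi.symm (L.bracket (L.phi (rs ξ)) x))) := by
    rw [hrs]
    have : L.phi.symm (L.phi.symm (L.bracket (L.phi (rs ξ)) x))
        = L.bracket (L.phi.symm (rs ξ)) y := by
      rw [hinv, hinv, L.phi.symm_apply_apply]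
    rw [this, L.skew]
    simp
  have hterm1 : (η ∘ₗ L.phi.toLinearMap) (rs (ξ ∘ₗ L.bracket y))
      = ξ (L.phi.symm (L.phi.symm (L.bracket (L.phi (rs η)) x))) := by
    have h1 : (η ∘ₗ L.phi.toLinearMap) (rs (ξ ∘ₗ L.bracket y))
        = η (L.phi (rs (ξ ∘ₗ L.bracket y))) := rfl
    rw [h1, ← hcomm (ξ ∘ₗ L.bracket y), hskew]
    have h2 : ((ξ ∘ₗ L.bracket y) ∘ₗ L.phi.symm.toLinearMap) (rs η)
        = ξ (L.bracket y (L.phi.symm (rs η))) := rfl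
    rw [h2]
    have h3 : L.phi.symm (L.phi.symm (L.bracket (L.phi (rs η)) x))
        = L.bracket (L.phi.symm (rs η)) y := by
      rw [hinv, hinv, L.phi.symm_apply_apply]
    rw [h3, L.skew]
    simp
  show (η ∘ₗ L.phi.toLinearMap) (rs (ξ ∘ₗ L.bracket y))
      + (η ∘ₗ L.bracket y) (rs (ξ ∘ₗ L.phi.toLinearMap)) = _
  rw [hterm1, hterm2]
  ring
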